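/- Let n and p be positive integers, M a real n × p matrix such that MᵀM is invertible, Φ a real symmetric positive definite p × p matrix, λ ≥ 0 a real number, and x ∈ ℝⁿ. Define ξ := (MᵀM + λΦ)⁻¹Mᵀx and ξ̃ := (MᵀM)⁻¹Mᵀx. Then ξᵀΦξ ≤ ξ̃ᵀΦξ̃; that is, the Φ-weighted norm of the ridge solution is at most the Φ-weighted norm of the least-squares solution. -/

import Mathlib

open Matrix

/-- For an `n × p` real matrix `M` with `MᵀM` invertible, a symmetric positive
definite `p × p` matrix `Φ`, `λ ≥ 0` and `x ∈ ℝⁿ`, the ridge solution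
`ξ = (MᵀM + λΦ)⁻¹Mᵀx` and least-squares solution `ξ̃ = (MᵀM)⁻¹Mᵀx` satisfy
`ξᵀΦξ ≤ ξ̃ᵀΦξ̃`. -/
theorem stmt15 (n p : ℕ) (hn : 0 < n) (hp : 0 < p)
    (M : Matrix (Fin n) (Fin p) ℝ) (hM : IsUnit (Mᵀ * M))
    (Φ : Matrix (Fin p) (Fin p) ℝ) (hΦ : Φ.PosDef)
    (l : ℝ) (hl : 0 ≤ l) (x : Fin n → ℝ) :
    ((Mᵀ * M + l • Φ)⁻¹ *ᵥ (Mᵀ *ᵥ x)) ⬝ᵥ (Φ *ᵥ ((Mᵀ * M + l • Φ)⁻¹ *ᵥ (Mᵀ *ᵥ x))) ≤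
      ((Mᵀ * M)⁻¹ *ᵥ (Mᵀ *ᵥ x)) ⬝ᵥ (Φ *ᵥ ((Mᵀ * M)⁻¹ *ᵥ (Mᵀ *ᵥ x))) := by
  have hdnn : ∀ (k : ℕ) (z : Fin k → ℝ), 0 ≤ z ⬝ᵥ z := fun k z =>
    Finset.sum_nonneg fun i _ => mul_self_nonneg _
  have key : ∀ (y : Fin p → ℝ) (z : Fin n → ℝ), y ⬝ᵥ (Mᵀ *ᵥ z) = (M *ᵥ y) ⬝ᵥ z := by
    intro y z
    rw [dotProduct_mulVec, vecMul_transpose]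
  have hAh : (Mᵀ * M).IsHermitian := by
    simpa using isHermitian_conjTranspose_mul_self M
  have hAquad : ∀ y : Fin p → ℝ, y ⬝ᵥ ((Mᵀ * M) *ᵥ y) = (M *ᵥ y) ⬝ᵥ (M *ᵥ y) := by
    intro y
    rw [← mulVec_mulVec, key]
  have hApd : (Mᵀ * M).PosDef := by
    refine PosDef.of_dotProduct_mulVec_pos hAh fun y hy => ?_
    have hMy : M *ᵥ y ≠ 0 := by
      intro h
      apply hy
      have h3 : (Mᵀ * M) *ᵥ y = (Mᵀ * M) *ᵥ 0 := by
        rw [← mulVec_mulVec, h, mulVec_zero, mulVec_zero]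
      exact (mulVec_injective_iff_isUnit.mpr hM) h3
    simp only [star_trivial]
    rw [hAquad]
    exact lt_of_le_of_ne (hdnn _ _) (Ne.symm (dotProduct_self_eq_zero.ne.mpr hMy))
  have hΦnn : ∀ y : Fin p → ℝ, 0 ≤ y ⬝ᵥ (Φ *ᵥ y) := by
    intro y; simpa using hΦ.posSemidef.dotProduct_mulVec_nonneg y
  have hΦT : Φᵀ = Φ := by
    have := hΦ.isHermitian.eq
    simpa [conjTranspose_eq_transpose_of_trivial] using this
  have hsm : (l • Φ).PosSemidef := by
    refine PosSemidef.of_dotProduct_mulVec_nonneg ?_ fun y => ?_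
    · show (l • Φ)ᴴ = l • Φ
      ext i j
      simp only [conjTranspose_apply, Matrix.smul_apply, star_trivial, smul_eq_mul]
      have : Φ j i = Φ i j := congrFun (congrFun hΦT i) j
      rw [this]
    · simp only [star_trivial, smul_mulVec, dotProduct_smul, smul_eq_mul]
      exact mul_nonneg hl (hΦnn y)
  have hBpd : (Mᵀ * M + l • Φ).PosDef := hApd.add_posSemidef hsm
  set A := Mᵀ * M with hAdef
  set B := Mᵀ * M + l • Φ with hBdef
  set b := Mᵀ *ᵥ x with hbdef
  set v := A⁻¹ *ᵥ b with hvdef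
  set ξ := B⁻¹ *ᵥ b with hξdef
  set w := B⁻¹ *ᵥ (Φ *ᵥ v) with hwdef
  have hAinv : A * A⁻¹ = 1 := mul_nonsing_inv _ ((isUnit_iff_isUnit_det _).mp hM)
  have hBinv : B * B⁻¹ = 1 := mul_nonsing_inv _ ((isUnit_iff_isUnit_det _).mp hBpd.isUnit)
  have hAv : A *ᵥ v = b := by rw [hvdef, mulVec_mulVec, hAinv, one_mulVec]
  have hBξ : B *ᵥ ξ = b := by rw [hξdef, mulVec_mulVec, hBinv, one_mulVec]
  have hBw : B *ᵥ w = Φ *ᵥ v := by rw [hwdef, mulVec_mulVec, hBinv, one_mulVec]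
  have hBinj : Function.Injective (B.mulVec) := mulVec_injective_iff_isUnit.mpr hBpd.isUnit
  have hveq : v = ξ + l • w := by
    apply hBinj
    rw [mulVec_add, mulVec_smul, hBξ, hBw]
    rw [hBdef, add_mulVec, hAv, smul_mulVec]
  have hsymm : ∀ y z : Fin p → ℝ, y ⬝ᵥ (Φ *ᵥ z) = z ⬝ᵥ (Φ *ᵥ y) := by
    intro y z
    rw [dotProduct_mulVec]
    nth_rewrite 1 [← hΦT]
    rw [vecMul_transpose, dotProduct_comm]
  have hcross : ξ ⬝ᵥ (Φ *ᵥ w) = w ⬝ᵥ (A *ᵥ w) := by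
    have h1 : ξ = v - l • w := by rw [hveq]; abel
    have h2 : v ⬝ᵥ (Φ *ᵥ w) = w ⬝ᵥ (A *ᵥ w) + l * (w ⬝ᵥ (Φ *ᵥ w)) := by
      rw [hsymm v w, ← hBw, hBdef, add_mulVec, dotProduct_add, smul_mulVec,
        dotProduct_smul, smul_eq_mul]
    rw [h1, sub_dotProduct, smul_dotProduct, smul_eq_mul, h2]
    ring
  have expand : v ⬝ᵥ (Φ *ᵥ v)
      = ξ ⬝ᵥ (Φ *ᵥ ξ) + 2 * l * (w ⬝ᵥ (A *ᵥ w)) + l ^ 2 * (w ⬝ᵥ (Φ *ᵥ w)) := by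
    rw [hveq, mulVec_add, mulVec_smul, dotProduct_add, add_dotProduct, add_dotProduct,
      dotProduct_smul, smul_dotProduct, smul_dotProduct, smul_eq_mul, smul_eq_mul, smul_eq_mul,
      dotProduct_smul, smul_eq_mul, hsymm w ξ, hcross]
    ring
  rw [expand]
  have h1 : 0 ≤ w ⬝ᵥ (A *ᵥ w) := by rw [hAquad]; exact hdnn _ _
  nlinarith [mul_nonneg hl h1, mul_nonneg (mul_nonneg hl hl) (hΦnn w)]
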